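/- Let 1 → ℤ → G̃ →^p G → 1 be a central extension with section σ : G → G̃ (p∘σ = id) whose associated 2-cocycle c(g,g') := σ(g)σ(g')σ(gg')⁻¹ ∈ ℤ satisfies |c(g,g')| ≤ 1 for all g, g'. Let S be a finite symmetric generating set of a subgroup Λ ≤ G, and equip Λ̃ := p⁻¹(Λ) with the generating set σ(S) ∪ {ε}, where ε generates the central ℤ. Then for every λ ∈ Λ, the word length satisfies |σ(λ)|_{Λ̃} ≤ 2|λ|_Λ. -/

import Mathlib

/-- Word length of `g` with respect to a generating set `S`. -/
noncomputable def wordLength {G : Type*} [Group G] (S : Set G) (g : G) : ℕ :=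
  sInf {n | ∃ l : List G, (∀ s ∈ l, s ∈ S) ∧ l.prod = g ∧ l.length = n}

private lemma keyList {G Gt : Type*} [Group G] [Group Gt]
    (ε : Gt) (σ : G → Gt) (hσ1 : σ 1 = 1)
    (hcocycle : ∀ g g' : G, ∃ k : ℤ, |k| ≤ 1 ∧ σ g * σ g' = ε ^ k * σ (g * g'))
    (S : Finset G) :
    ∀ l : List G, (∀ s ∈ l, s ∈ S) →
      ∃ l' : List Gt, (∀ t ∈ l', t ∈ (σ '' (S : Set G)) ∪ {ε, ε⁻¹}) ∧
        l'.prod = σ l.prod ∧ l'.length ≤ 2 * l.length := by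
  intro l
  induction l with
  | nil => intro _; exact ⟨[], by simp, by simp [hσ1], by simp⟩
  | cons a t ih =>
    intro hl
    obtain ⟨l', hl'mem, hl'prod, hl'len⟩ := ih (fun s hs => hl s (List.mem_cons_of_mem _ hs))
    have haS : a ∈ S := hl a (List.mem_cons_self)
    have haσ : σ a ∈ (σ '' (S : Set G)) ∪ {ε, ε⁻¹} := Or.inl ⟨a, haS, rfl⟩
    obtain ⟨k, hk, heq⟩ := hcocycle a t.prod
    have hprod : σ (a * t.prod) = (ε ^ k)⁻¹ * (σ a * σ t.prod) := by
      rw [heq, inv_mul_cancel_left]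
    rw [abs_le] at hk
    obtain ⟨hk1, hk2⟩ := hk
    interval_cases k
    · refine ⟨ε :: σ a :: l', ?_, ?_, ?_⟩
      · intro x hx
        simp only [List.mem_cons] at hx
        rcases hx with rfl | rfl | hx
        · exact Or.inr (Or.inl rfl)
        · exact haσ
        · exact hl'mem _ hx
      · simp only [List.prod_cons, hl'prod, hprod]
        group
      · simp only [List.length_cons] at *; omega
    · refine ⟨σ a :: l', ?_, ?_, ?_⟩
      · intro x hx
        simp only [List.mem_cons] at hx
        rcases hx with rfl | hx
        · exact haσ
        · exact hl'mem _ hx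
      · simp only [List.prod_cons, hl'prod, hprod]
        group
      · simp only [List.length_cons] at *; omega
    · refine ⟨ε⁻¹ :: σ a :: l', ?_, ?_, ?_⟩
      · intro x hx
        simp only [List.mem_cons] at hx
        rcases hx with rfl | rfl | hx
        · exact Or.inr (Or.inr rfl)
        · exact haσ
        · exact hl'mem _ hx
      · simp only [List.prod_cons, hl'prod, hprod]
        group
      · simp only [List.length_cons] at *; omega

/-- In a central extension `1 → ℤ → G̃ → G → 1` with a section `σ` whose 2-cocycle is
bounded by `1` in absolute value, one has `|σ(λ)|_{Λ̃} ≤ 2|λ|_Λ` for every `λ` in the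
subgroup generated by a finite symmetric set `S`, where `Λ̃ = p⁻¹(Λ)` carries the
generating set `σ(S) ∪ {ε^{±1}}`. -/
theorem stmt11 {G Gt : Type*} [Group G] [Group Gt]
    (p : Gt →* G) (ε : Gt) (hεcentral : ∀ x : Gt, ε * x = x * ε)
    (hker : p.ker = Subgroup.zpowers ε)
    (σ : G → Gt) (hσ : ∀ g : G, p (σ g) = g) (hσ1 : σ 1 = 1)
    (hcocycle : ∀ g g' : G, ∃ k : ℤ, |k| ≤ 1 ∧ σ g * σ g' = ε ^ k * σ (g * g'))
    (S : Finset G) (hsymm : ∀ s ∈ S, s⁻¹ ∈ S)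
    (lam : G) (hlam : lam ∈ Subgroup.closure (S : Set G)) :
    ∃ l : List Gt, (∀ t ∈ l, t ∈ (σ '' (S : Set G)) ∪ {ε, ε⁻¹}) ∧
      l.prod = σ lam ∧ l.length ≤ 2 * wordLength (S : Set G) lam := by
  -- lam is a product of elements of S
  have hmono : lam ∈ Submonoid.closure ((S : Set G) ∪ (S : Set G)⁻¹) := by
    rw [← Subgroup.closure_toSubmonoid] at *
    exact hlam
  obtain ⟨l0, hl0mem, hl0prod⟩ := Submonoid.exists_list_of_mem_closure hmono
  have hl0S : ∀ s ∈ l0, s ∈ S := by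
    intro s hs
    rcases hl0mem s hs with h | h
    · exact h
    · have := hsymm _ h
      simpa using this
  -- the defining set of wordLength is nonempty
  have hne : {n | ∃ l : List G, (∀ s ∈ l, s ∈ (S : Set G)) ∧ l.prod = lam ∧ l.length = n}.Nonempty :=
    ⟨l0.length, l0, hl0S, hl0prod, rfl⟩
  obtain ⟨l1, hl1S, hl1prod, hl1len⟩ := Nat.sInf_mem hne
  obtain ⟨l', h1, h2, h3⟩ := keyList ε σ hσ1 hcocycle S l1 hl1S
  refine ⟨l', h1, by rw [h2, hl1prod], ?_⟩
  unfold wordLength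
  omega
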